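/- Let X be a simply connected, locally path-connected topological space and U, V ⊆ X open connected sets with U ∪ V = X. Then U ∩ V is connected. -/

import Mathlib

open Set unitInterval

private lemma zmod2_add_self : ∀ z : ZMod 2, z + z = 0 := by decide

private lemma four_cycle : ∀ (l00 l10 l01 l11 : Bool) (bb : ZMod 2),
    ((if l00 = l10 then 0 else bb) + (if l01 = l11 then 0 else bb))
      + ((if l00 = l01 then 0 else bb) + (if l10 = l11 then 0 else bb)) = 0 := by decide

private lemma shift_sum (f : ℤ → ZMod 2) (N : ℕ) :
    ((Finset.range (N+1)).sum fun k => f ((k:ℤ)-1)) + ((Finset.range (N+1)).sum fun k => f (k:ℤ))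
      = f (-1) + f (N:ℤ) := by
  induction N with
  | zero => simp
  | succ N ih =>
    rw [Finset.sum_range_succ (fun k => f ((k:ℤ)-1)), Finset.sum_range_succ (fun k => f (k:ℤ))]
    have e : ((N+1:ℕ):ℤ) - 1 = (N:ℤ) := by push_cast; ring
    rw [e]
    linear_combination ih + zmod2_add_self (f (N:ℤ))

theorem stmt3 {X : Type*} [TopologicalSpace X] [SimplyConnectedSpace X]
    [LocallyPathConnectedSpace X]
    (U V : Set X) (hU : IsOpen U) (hV : IsOpen V)
    (hUc : IsConnected U) (hVc : IsConnected V)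
    (hcover : U ∪ V = Set.univ) : IsConnected (U ∩ V) := by
  classical
  have hne : (U ∩ V).Nonempty := by
    have h := (isPreconnected_univ (α := X)) U V hU hV (by rw [hcover])
      (by simpa using hUc.nonempty) (by simpa using hVc.nonempty)
    simpa using h
  refine ⟨hne, ?_⟩
  by_contra hpc
  unfold IsPreconnected at hpc
  push_neg at hpc
  obtain ⟨u, v, hu, hv, hsub, hneu, hnev, hdis⟩ := hpc
  set A : Set X := (U ∩ V) ∩ u with hA
  set B : Set X := (U ∩ V) ∩ v with hB
  have hAopen : IsOpen A := (hU.inter hV).inter hu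
  have hBopen : IsOpen B := (hU.inter hV).inter hv
  have hABU : A ∪ B = U ∩ V := by
    rw [hA, hB, ← Set.inter_union_distrib_left]
    exact Set.inter_eq_self_of_subset_left hsub
  have hdisj : Disjoint A B := by
    rw [Set.disjoint_left]
    intro x hxA hxB
    have : x ∈ (U ∩ V) ∩ (u ∩ v) := ⟨hxA.1, hxA.2, hxB.2⟩
    rw [hdis] at this
    exact this
  obtain ⟨a, haA⟩ := hneu
  obtain ⟨b, hbB⟩ := hnev
  have haA : a ∈ A := haA
  have hbB : b ∈ B := hbB
  have haUV : a ∈ U ∩ V := hABU ▸ Set.mem_union_left _ haA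
  have hbUV : b ∈ U ∩ V := hABU ▸ Set.mem_union_right _ hbB
  have haB : a ∉ B := Set.disjoint_left.1 hdisj haA
  -- paths
  obtain ⟨p, hp⟩ : ∃ p : Path a b, ∀ t, p t ∈ U :=
    ((hU.isConnected_iff_isPathConnected).mp hUc).joinedIn a haUV.1 b hbUV.1
  obtain ⟨q, hq⟩ : ∃ q : Path b a, ∀ t, q t ∈ V :=
    ((hV.isConnected_iff_isPathConnected).mp hVc).joinedIn b hbUV.2 a haUV.2
  set γ : Path a a := p.trans q with hγ
  have hγU : ∀ s : I, (s:ℝ) ≤ 1/2 → γ s ∈ U := by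
    intro s hs
    rw [hγ, Path.trans_apply, dif_pos hs]
    exact hp _
  have hp1 : ∀ t : I, (t:ℝ) = 1 → p t = b := by
    intro t ht
    rw [show t = 1 from Subtype.ext (by simpa using ht)]
    exact p.target
  have hγhalf : ∀ s : I, (s:ℝ) = 1/2 → γ s = b := by
    intro s hs
    rw [hγ, Path.trans_apply, dif_pos (le_of_eq hs)]
    exact hp1 _ (by show 2 * (s:ℝ) = 1; rw [hs]; norm_num)
  have hγV : ∀ s : I, 1/2 ≤ (s:ℝ) → γ s ∈ V := by
    intro s hs
    rcases le_or_gt (s:ℝ) (1/2) with h | h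
    · rw [hγhalf s (le_antisymm h hs)]
      exact hbUV.2
    · rw [hγ, Path.trans_apply, dif_neg (not_le.2 h)]
      exact hq _
  -- homotopy
  obtain ⟨H⟩ := SimplyConnectedSpace.paths_homotopic γ (Path.refl a)
  -- Lebesgue number
  obtain ⟨δ, hδpos, hball⟩ : ∃ δ > 0, ∀ z : I × I,
      (Metric.ball z δ ⊆ ⇑H ⁻¹' U) ∨ (Metric.ball z δ ⊆ ⇑H ⁻¹' V) := by
    obtain ⟨δ, hδ, hb⟩ := lebesgue_number_lemma_of_metric (s := (univ : Set (I × I)))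
      (c := fun b : Bool => if b then ⇑H ⁻¹' V else ⇑H ⁻¹' U) isCompact_univ
      (by rintro (_|_) <;> simp <;>
        [exact hU.preimage H.continuous; exact hV.preimage H.continuous])
      (by intro z _
          have : H z ∈ U ∪ V := by rw [hcover]; trivial
          rcases this with h | h
          · exact mem_iUnion.2 ⟨false, by simpa using h⟩
          · exact mem_iUnion.2 ⟨true, by simpa using h⟩)
    refine ⟨δ, hδ, fun z => ?_⟩
    rcases hb z trivial with ⟨(_|_), h⟩
    · exact Or.inl (by simpa using h)
    · exact Or.inr (by simpa using h)
  -- grid size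
  obtain ⟨m, hm1, hmδ⟩ : ∃ m : ℕ, 1 ≤ m ∧ 1 / (2 * m : ℝ) < δ := by
    obtain ⟨k, hk⟩ := exists_nat_one_div_lt hδpos
    refine ⟨k + 1, le_add_self, lt_of_le_of_lt ?_ hk⟩
    rw [div_le_div_iff₀ (by positivity) (by positivity)]
    push_cast; nlinarith
  set n : ℕ := 2 * m with hnm
  have hn0 : (0:ℝ) < n := by positivity
  have hnδ : 1 / (n:ℝ) < δ := by rw [hnm]; push_cast; exact hmδ
  have hhalf : (m:ℝ) / n = 1/2 := by
    rw [hnm]; push_cast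
    field_simp
  -- the extended map on ℝ²
  obtain ⟨F, hFc, hFdef⟩ : ∃ F : ℝ × ℝ → X, Continuous F ∧
      ∀ z : ℝ × ℝ, F z = H (projIcc 0 1 zero_le_one z.2, projIcc 0 1 zero_le_one z.1) :=
    ⟨_, H.continuous.comp ((continuous_projIcc.comp continuous_snd).prodMk
      (continuous_projIcc.comp continuous_fst)), fun _ => rfl⟩
  have hproj0 : ∀ x : ℝ, x ≤ 0 → projIcc (0:ℝ) 1 zero_le_one x = 0 := by
    intro x hx
    apply Subtype.ext
    rw [coe_projIcc]
    simp only [Icc.coe_zero]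
    have : min 1 x ≤ 0 := le_trans (min_le_right _ _) hx
    exact max_eq_left this
  have hproj1 : ∀ x : ℝ, 1 ≤ x → projIcc (0:ℝ) 1 zero_le_one x = 1 := by
    intro x hx
    apply Subtype.ext
    rw [coe_projIcc]
    simp only [Icc.coe_one]
    rw [min_eq_left hx]
    exact max_eq_right zero_le_one
  have hFbot : ∀ z : ℝ × ℝ, z.2 ≤ 0 → F z = γ (projIcc 0 1 zero_le_one z.1) := by
    intro z hz
    rw [hFdef, hproj0 _ hz]
    exact H.apply_zero _
  have hFtop : ∀ z : ℝ × ℝ, 1 ≤ z.2 → F z = a := by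
    intro z hz
    rw [hFdef, hproj1 _ hz]
    exact H.apply_one _
  have hFleft : ∀ z : ℝ × ℝ, z.1 ≤ 0 → F z = a := by
    intro z hz
    rw [hFdef, hproj0 _ hz]
    exact H.source _
  have hFright : ∀ z : ℝ × ℝ, 1 ≤ z.1 → F z = a := by
    intro z hz
    rw [hFdef, hproj1 _ hz]
    exact H.target _
  -- squares
  obtain ⟨Q, hQdef⟩ : ∃ Q : ℤ → ℤ → Set (ℝ × ℝ), ∀ i j : ℤ,
      Q i j = Icc ((i:ℝ)/n) (((i:ℝ)+1)/n) ×ˢ Icc ((j:ℝ)/n) (((j:ℝ)+1)/n) :=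
    ⟨_, fun _ _ => rfl⟩
  -- Lebesgue labels on real squares
  have hleb : ∀ i j : ℤ, 0 ≤ i → (i:ℤ) < n → 0 ≤ j → (j:ℤ) < n →
      Set.MapsTo F (Q i j) U ∨ Set.MapsTo F (Q i j) V := by
    intro i j h0i hin h0j hjn
    set z0 : I × I := (projIcc 0 1 zero_le_one ((j:ℝ)/n), projIcc 0 1 zero_le_one ((i:ℝ)/n))
      with hz0
    have hmem : ∀ z : ℝ × ℝ, z ∈ Q i j →
        (projIcc 0 1 zero_le_one z.2, projIcc 0 1 zero_le_one z.1) ∈ Metric.ball z0 δ := by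
      intro z hz
      rw [hQdef, Set.mem_prod] at hz
      obtain ⟨hz1, hz2⟩ := hz
      have key : ∀ (w c : ℝ), 0 ≤ c → c + 1 ≤ (n:ℝ) → w ∈ Icc (c/n) ((c+1)/n) →
          dist (projIcc 0 1 zero_le_one w) (projIcc 0 1 zero_le_one (c/n)) ≤ 1/n := by
        intro w c hc hcn hw
        have hw0 : 0 ≤ w := le_trans (by positivity) hw.1
        have hw1 : w ≤ 1 := le_trans hw.2 (by rw [div_le_one hn0]; exact hcn)
        have hc0 : 0 ≤ c/n := by positivity
        have hc1 : c/n ≤ 1 := by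
          rw [div_le_one hn0]; linarith
        rw [projIcc_of_mem _ ⟨hw0, hw1⟩, projIcc_of_mem _ ⟨hc0, hc1⟩]
        rw [Subtype.dist_eq, Real.dist_eq]
        rw [abs_le]
        constructor
        · have : c/n ≤ w := hw.1
          linarith [hn0.le, div_nonneg (zero_le_one' ℝ) hn0.le]
        · have : w ≤ (c+1)/n := hw.2
          have e : (c+1)/n = c/n + 1/n := by ring
          linarith [e ▸ this]
      have h1 : dist (projIcc 0 1 zero_le_one z.2) (projIcc 0 1 zero_le_one ((j:ℝ)/n)) ≤ 1/n :=
        key z.2 (j:ℝ) (by exact_mod_cast h0j) (by push_cast; exact_mod_cast by push_cast; linarith [show ((j:ℝ)) + 1 ≤ (n:ℝ) from by exact_mod_cast hjn]) hz2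
      have h2 : dist (projIcc 0 1 zero_le_one z.1) (projIcc 0 1 zero_le_one ((i:ℝ)/n)) ≤ 1/n :=
        key z.1 (i:ℝ) (by exact_mod_cast h0i) (by exact_mod_cast hin) hz1
      rw [Metric.mem_ball, Prod.dist_eq]
      exact lt_of_le_of_lt (max_le h1 h2) hnδ
    rcases hball z0 with hb | hb
    · left
      intro z hz
      rw [hFdef]
      exact hb (hmem z hz)
    · right
      intro z hz
      rw [hFdef]
      exact hb (hmem z hz)
  -- labels
  obtain ⟨C, hCf, hCt⟩ : ∃ C : Bool → Set X, C false = U ∧ C true = V :=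
    ⟨fun b => if b then V else U, rfl, rfl⟩
  obtain ⟨L, hLbot, hLleft, hLright, hLtop, hLmid⟩ :
      ∃ L : ℤ → ℤ → Bool,
        (∀ i j : ℤ, j < 0 → L i j = decide ((m:ℤ) ≤ i)) ∧
        (∀ i j : ℤ, i < 0 → 0 ≤ j → L i j = false) ∧
        (∀ i j : ℤ, (n:ℤ) ≤ i → 0 ≤ j → L i j = false) ∧
        (∀ i j : ℤ, (n:ℤ) ≤ j → L i j = false) ∧
        (∀ i j : ℤ, 0 ≤ i → i < n → 0 ≤ j → j < n → Set.MapsTo F (Q i j) (C (L i j))) := by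
    refine ⟨fun i j => if j < 0 then decide ((m:ℤ) ≤ i) else if (n:ℤ) ≤ j then false
      else if i < 0 ∨ (n:ℤ) ≤ i then false
      else if Set.MapsTo F (Q i j) U then false else true, ?_, ?_, ?_, ?_, ?_⟩
    · intro i j hj; simp [hj]
    · intro i j hi hj
      simp only [if_neg (not_lt.2 hj)]
      split
      · rfl
      · rw [if_pos (Or.inl hi)]
    · intro i j hi hj
      simp only [if_neg (not_lt.2 hj)]
      split
      · rfl
      · rw [if_pos (Or.inr hi)]
    · intro i j hj
      simp only [if_neg (not_lt.2 (le_trans (by positivity) hj)), if_pos hj]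
    · intro i j h0i hin h0j hjn
      simp only [if_neg (not_lt.2 h0j), if_neg (not_le.2 hjn),
        if_neg (by omega : ¬(i < 0 ∨ (n:ℤ) ≤ i))]
      by_cases hM : Set.MapsTo F (Q i j) U
      · rw [if_pos hM, hCf]; exact hM
      · rw [if_neg hM, hCt]; exact (hleb i j h0i hin h0j hjn).resolve_left hM
  have hmono : ∀ x y : ℝ, x ≤ y → x/(n:ℝ) ≤ y/(n:ℝ) := by
    intro x y h; gcongr
  -- full maps-to property
  have hQmaps : ∀ i j : ℤ, Set.MapsTo F (Q i j) (C (L i j)) := by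
    intro i j z hz
    have hz' := hz
    rw [hQdef, Set.mem_prod, Set.mem_Icc, Set.mem_Icc] at hz'
    obtain ⟨hz1, hz2⟩ := hz'
    rcases lt_or_ge j 0 with hj | h0j
    · rw [hLbot i j hj]
      have hj1 : ((j:ℝ)+1) ≤ 0 := by
        have : ((j+1 : ℤ) : ℝ) ≤ 0 := by exact_mod_cast (show (j:ℤ)+1 ≤ 0 by omega)
        push_cast at this; linarith
      have hz2' : z.2 ≤ 0 :=
        le_trans hz2.2 (div_nonpos_of_nonpos_of_nonneg hj1 hn0.le)
      rw [hFbot z hz2']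
      rcases le_or_gt (m:ℤ) i with him | him
      · rw [decide_eq_true him, hCt]
        apply hγV
        rw [coe_projIcc]
        have h1 : (1:ℝ)/2 ≤ (i:ℝ)/n := by
          rw [← hhalf]; apply hmono; exact_mod_cast him
        have h2 : (1:ℝ)/2 ≤ 1 ⊓ z.1 := le_inf (by norm_num) (by linarith [hz1.1])
        calc (1:ℝ)/2 ≤ 1 ⊓ z.1 := h2
          _ ≤ 0 ⊔ 1 ⊓ z.1 := le_sup_right
      · rw [decide_eq_false (not_le.2 him), hCf]
        apply hγU
        rw [coe_projIcc]
        have h1 : ((i:ℝ)+1)/n ≤ 1/2 := by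
          rw [← hhalf]; apply hmono
          have : ((i+1 : ℤ) : ℝ) ≤ (m:ℝ) := by exact_mod_cast (show (i:ℤ)+1 ≤ (m:ℤ) by omega)
          push_cast at this; linarith
        refine sup_le (by norm_num) ?_
        calc (1:ℝ) ⊓ z.1 ≤ z.1 := inf_le_right
          _ ≤ ((i:ℝ)+1)/n := hz1.2
          _ ≤ 1/2 := h1
    · rcases le_or_gt (n:ℤ) j with hnj | hjn
      · rw [hLtop i j hnj, hCf, hFtop z ?_]
        · exact haUV.1
        · have h1 : (1:ℝ) = (n:ℝ)/n := (div_self hn0.ne').symm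
          have h2 : (n:ℝ)/n ≤ (j:ℝ)/n := by apply hmono; exact_mod_cast hnj
          linarith [hz2.1]
      · rcases lt_or_ge i 0 with hi | h0i
        · rw [hLleft i j hi h0j, hCf, hFleft z ?_]
          · exact haUV.1
          · have hi1 : ((i:ℝ)+1) ≤ 0 := by
              have : ((i+1 : ℤ) : ℝ) ≤ 0 := by exact_mod_cast (show (i:ℤ)+1 ≤ 0 by omega)
              push_cast at this; linarith
            exact le_trans hz1.2 (div_nonpos_of_nonpos_of_nonneg hi1 hn0.le)
        · rcases le_or_gt (n:ℤ) i with hni | hin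
          · rw [hLright i j hni h0j, hCf, hFright z ?_]
            · exact haUV.1
            · have h1 : (1:ℝ) = (n:ℝ)/n := (div_self hn0.ne').symm
              have h2 : (n:ℝ)/n ≤ (i:ℝ)/n := by apply hmono; exact_mod_cast hni
              linarith [hz1.1]
          · exact hLmid i j h0i hin h0j hjn hz
  -- weights
  obtain ⟨Bm, hBm⟩ : ∃ Bm : X → ZMod 2, ∀ x, Bm x = if x ∈ B then 1 else 0 :=
    ⟨_, fun _ => rfl⟩
  obtain ⟨wv, hwv⟩ : ∃ wv : ℤ → ℤ → ZMod 2, ∀ i j, wv i j =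
      if L (i-1) j = L i j then 0 else Bm (F ((i:ℝ)/n, (j:ℝ)/n)) := ⟨_, fun _ _ => rfl⟩
  obtain ⟨wh, hwh⟩ : ∃ wh : ℤ → ℤ → ZMod 2, ∀ i j, wh i j =
      if L i (j-1) = L i j then 0 else Bm (F ((i:ℝ)/n, (j:ℝ)/n)) := ⟨_, fun _ _ => rfl⟩
  -- edge constancy
  have hedge : ∀ (S : Set (ℝ × ℝ)), Convex ℝ S → ∀ i1 j1 i2 j2 : ℤ, S ⊆ Q i1 j1 → S ⊆ Q i2 j2 →
      L i1 j1 ≠ L i2 j2 → ∀ z1 ∈ S, ∀ z2 ∈ S, Bm (F z1) = Bm (F z2) := by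
    intro S hS i1 j1 i2 j2 hs1 hs2 hne12 z1 hz1 z2 hz2
    have h1 : Set.MapsTo F S (C (L i1 j1)) := fun z hz => hQmaps i1 j1 (hs1 hz)
    have h2 : Set.MapsTo F S (C (L i2 j2)) := fun z hz => hQmaps i2 j2 (hs2 hz)
    have hUV : Set.MapsTo F S (U ∩ V) := by
      cases hb1 : L i1 j1 <;> cases hb2 : L i2 j2
      · exact absurd (hb1.trans hb2.symm) hne12
      · rw [hb1, hCf] at h1; rw [hb2, hCt] at h2
        exact fun z hz => ⟨h1 hz, h2 hz⟩
      · rw [hb1, hCt] at h1; rw [hb2, hCf] at h2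
        exact fun z hz => ⟨h2 hz, h1 hz⟩
      · exact absurd (hb1.trans hb2.symm) hne12
    have hpre : IsPreconnected (F '' S) := hS.isPreconnected.image F hFc.continuousOn
    have hsubAB : F '' S ⊆ A ∪ B := by
      rw [hABU]
      rintro _ ⟨z, hz, rfl⟩
      exact hUV hz
    rcases hpre.subset_or_subset hAopen hBopen hdisj hsubAB with h | h
    · rw [hBm, hBm,
        if_neg (Set.disjoint_left.1 hdisj (h ⟨z1, hz1, rfl⟩)),
        if_neg (Set.disjoint_left.1 hdisj (h ⟨z2, hz2, rfl⟩))]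
    · rw [hBm, hBm, if_pos (h ⟨z1, hz1, rfl⟩), if_pos (h ⟨z2, hz2, rfl⟩)]
  -- vertex cocycle condition
  have hvertex : ∀ i j : ℤ, (wv i (j-1) + wv i j) + (wh (i-1) j + wh i j) = 0 := by
    intro i j
    have e1 : wv i (j-1) = if L (i-1) (j-1) = L i (j-1) then 0
        else Bm (F ((i:ℝ)/n, (j:ℝ)/n)) := by
      rw [hwv]
      by_cases h : L (i-1) (j-1) = L i (j-1)
      · rw [if_pos h, if_pos h]
      · rw [if_neg h, if_neg h]
        refine hedge (Set.Icc ((i:ℝ)/n) ((i:ℝ)/n) ×ˢ Set.Icc (((j:ℝ)-1)/n) ((j:ℝ)/n))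
          ((convex_Icc _ _).prod (convex_Icc _ _)) (i-1) (j-1) i (j-1) ?_ ?_ h _ ?_ _ ?_
        · intro z hz
          rw [Set.mem_prod, Set.mem_Icc, Set.mem_Icc] at hz
          rw [hQdef, Set.mem_prod, Set.mem_Icc, Set.mem_Icc]
          push_cast
          refine ⟨⟨?_, ?_⟩, ⟨?_, ?_⟩⟩
          · linarith [hz.1.1, hmono ((i:ℝ)-1) (i:ℝ) (by linarith)]
          · linarith [hz.1.2, hmono ((i:ℝ)) ((i:ℝ)-1+1) (by linarith)]
          · exact hz.2.1
          · linarith [hz.2.2, hmono ((j:ℝ)) ((j:ℝ)-1+1) (by linarith)]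
        · intro z hz
          rw [Set.mem_prod, Set.mem_Icc, Set.mem_Icc] at hz
          rw [hQdef, Set.mem_prod, Set.mem_Icc, Set.mem_Icc]
          push_cast
          refine ⟨⟨?_, ?_⟩, ⟨?_, ?_⟩⟩
          · exact hz.1.1
          · linarith [hz.1.2, hmono ((i:ℝ)) ((i:ℝ)+1) (by linarith)]
          · exact hz.2.1
          · linarith [hz.2.2, hmono ((j:ℝ)) ((j:ℝ)-1+1) (by linarith)]
        · rw [Set.mem_prod, Set.mem_Icc, Set.mem_Icc]
          push_cast
          refine ⟨⟨le_refl _, le_refl _⟩, le_refl _, hmono _ _ (by linarith)⟩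
        · rw [Set.mem_prod, Set.mem_Icc, Set.mem_Icc]
          exact ⟨⟨le_refl _, le_refl _⟩, hmono _ _ (by linarith), le_refl _⟩
    have e3 : wh (i-1) j = if L (i-1) (j-1) = L (i-1) j then 0
        else Bm (F ((i:ℝ)/n, (j:ℝ)/n)) := by
      rw [hwh]
      by_cases h : L (i-1) (j-1) = L (i-1) j
      · rw [if_pos h, if_pos h]
      · rw [if_neg h, if_neg h]
        refine hedge (Set.Icc (((i:ℝ)-1)/n) ((i:ℝ)/n) ×ˢ Set.Icc ((j:ℝ)/n) ((j:ℝ)/n))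
          ((convex_Icc _ _).prod (convex_Icc _ _)) (i-1) (j-1) (i-1) j ?_ ?_ h _ ?_ _ ?_
        · intro z hz
          rw [Set.mem_prod, Set.mem_Icc, Set.mem_Icc] at hz
          rw [hQdef, Set.mem_prod, Set.mem_Icc, Set.mem_Icc]
          push_cast
          refine ⟨⟨?_, ?_⟩, ⟨?_, ?_⟩⟩
          · exact hz.1.1
          · linarith [hz.1.2, hmono ((i:ℝ)) ((i:ℝ)-1+1) (by linarith)]
          · linarith [hz.2.1, hmono ((j:ℝ)-1) ((j:ℝ)) (by linarith)]
          · linarith [hz.2.2, hmono ((j:ℝ)) ((j:ℝ)-1+1) (by linarith)]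
        · intro z hz
          rw [Set.mem_prod, Set.mem_Icc, Set.mem_Icc] at hz
          rw [hQdef, Set.mem_prod, Set.mem_Icc, Set.mem_Icc]
          push_cast
          refine ⟨⟨?_, ?_⟩, ⟨?_, ?_⟩⟩
          · exact hz.1.1
          · linarith [hz.1.2, hmono ((i:ℝ)) ((i:ℝ)-1+1) (by linarith)]
          · exact hz.2.1
          · linarith [hz.2.2, hmono ((j:ℝ)) ((j:ℝ)+1) (by linarith)]
        · rw [Set.mem_prod, Set.mem_Icc, Set.mem_Icc]
          push_cast
          exact ⟨⟨le_refl _, hmono _ _ (by linarith)⟩, le_refl _, le_refl _⟩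
        · rw [Set.mem_prod, Set.mem_Icc, Set.mem_Icc]
          exact ⟨⟨hmono _ _ (by linarith), le_refl _⟩, le_refl _, le_refl _⟩
    rw [e1, hwv i j, e3, hwh i j]
    exact four_cycle (L (i-1) (j-1)) (L i (j-1)) (L (i-1) j) (L i j)
      (Bm (F ((i:ℝ)/n, (j:ℝ)/n)))
  -- row sums
  obtain ⟨c, hc⟩ : ∃ c : ℤ → ZMod 2, ∀ j : ℤ,
      c j = (Finset.range (n+1)).sum fun k => wv (k:ℤ) j := ⟨_, fun _ => rfl⟩
  have hL_left : ∀ j : ℤ, L (-1) j = false := by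
    intro j
    rcases lt_or_ge j 0 with hj | hj
    · rw [hLbot _ _ hj]
      rw [decide_eq_false (by omega : ¬ (m:ℤ) ≤ -1)]
    · rcases le_or_gt (n:ℤ) j with h | h
      · exact hLtop _ _ h
      · exact hLleft _ _ (by norm_num) hj
  have hwh_left : ∀ j : ℤ, wh (-1) j = 0 := by
    intro j; rw [hwh, if_pos (by rw [hL_left, hL_left])]
  have hwh_n : ∀ j : ℤ, wh (n:ℤ) j = 0 := by
    intro j
    rcases lt_trichotomy j 0 with hj | hj | hj
    · rw [hwh, if_pos (by rw [hLbot _ _ hj, hLbot _ _ (by omega)])]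
    · subst hj
      have hcond : ¬ L (n:ℤ) ((0:ℤ)-1) = L (n:ℤ) 0 := by
        rw [hLbot _ _ (by norm_num), hLright _ _ le_rfl le_rfl]
        simp only [ne_eq, decide_eq_false_iff_not, not_not]
        omega
      have hFa : F (((n:ℤ):ℝ)/n, ((0:ℤ):ℝ)/n) = a := by
        apply hFright
        show ((1:ℝ)) ≤ ((n:ℤ):ℝ)/n
        push_cast
        rw [div_self hn0.ne']
      rw [hwh, if_neg hcond, hBm, hFa, if_neg haB]
    · rw [hwh, if_pos (by rw [hLright _ _ le_rfl (by omega), hLright _ _ le_rfl (by omega)])]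
  have hstep : ∀ j : ℤ, c (j+1) = c j := by
    intro j
    have hs : ((Finset.range (n+1)).sum fun k =>
        (wv (k:ℤ) j + wv (k:ℤ) (j+1)) + (wh ((k:ℤ)-1) (j+1) + wh (k:ℤ) (j+1))) = 0 := by
      apply Finset.sum_eq_zero
      intro k _
      have h := hvertex (k:ℤ) (j+1)
      rwa [show (j+1-1 : ℤ) = j by ring] at h
    rw [Finset.sum_add_distrib, Finset.sum_add_distrib, Finset.sum_add_distrib] at hs
    have hshift := shift_sum (fun k => wh k (j+1)) n
    beta_reduce at hshift
    rw [hwh_left, hwh_n] at hshift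
    rw [← hc, ← hc] at hs
    linear_combination hs - hshift - zmod2_add_self (c j)
  have hchain : ∀ N : ℕ, c (-1 + (N:ℤ)) = c (-1) := by
    intro N
    induction N with
    | zero => simp
    | succ N ih =>
      have e : (-1 + ((N+1:ℕ):ℤ)) = (-1 + (N:ℤ)) + 1 := by push_cast; ring
      rw [e, hstep]
      exact ih
  have hcbot : c (-1) = 1 := by
    rw [hc]
    rw [Finset.sum_eq_single_of_mem m (Finset.mem_range.2 (by omega)) ?_]
    · have hcond : ¬ L ((m:ℤ)-1) (-1) = L (m:ℤ) (-1) := by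
        rw [hLbot _ _ (by norm_num), hLbot _ _ (by norm_num)]
        simp only [ne_eq, decide_eq_decide]
        omega
      have hF12 : F (((m:ℤ):ℝ)/n, ((-1:ℤ):ℝ)/n) = b := by
        rw [hFbot _ (by
          show ((-1:ℤ):ℝ)/n ≤ 0
          push_cast
          exact div_nonpos_of_nonpos_of_nonneg (by norm_num) hn0.le)]
        have e : ((m:ℤ):ℝ)/n = 1/2 := by push_cast; exact hhalf
        show γ (projIcc 0 1 zero_le_one (((m:ℤ):ℝ)/n)) = b
        rw [e, projIcc_of_mem _ (by norm_num : (1/2:ℝ) ∈ Icc (0:ℝ) 1)]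
        exact hγhalf _ rfl
      rw [hwv, if_neg hcond, hBm, hF12, if_pos hbB]
    · intro k hk hkm
      have hkm' : (k:ℤ) ≠ (m:ℤ) := by exact_mod_cast hkm
      rw [hwv, if_pos ?_]
      rw [hLbot _ _ (by norm_num), hLbot _ _ (by norm_num)]
      exact decide_eq_decide.mpr (by omega)
  have hctop : c (n:ℤ) = 0 := by
    rw [hc]
    apply Finset.sum_eq_zero
    intro k _
    rw [hwv, if_pos (by rw [hLtop _ _ le_rfl, hLtop _ _ le_rfl])]
  have hfin := hchain (n+1)
  rw [show (-1 + ((n+1:ℕ):ℤ)) = (n:ℤ) by push_cast; ring] at hfin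
  rw [hcbot, hctop] at hfin
  exact absurd hfin (by decide)
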